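/- Every finite strongly connected directed multigraph has a multi-Eulerian tour: a closed walk that uses every directed edge at least once and uses edges e and f the same number of times whenever tail(e) = tail(f). -/

import Mathlib

open Finset

structure Multigraph (V E : Type) where
  tail : E → V
  head : E → V

namespace Multigraph

variable {V E : Type} [Fintype V] [Fintype E] [DecidableEq V] [DecidableEq E]

/-- Outdegree of a vertex. -/
def outdeg (G : Multigraph V E) (v : V) : ℕ :=
  (Finset.univ.filter (fun e => G.tail e = v)).card

/-- Indegree of a vertex. -/
def indeg (G : Multigraph V E) (v : V) : ℕ :=
  (Finset.univ.filter (fun e => G.head e = v)).card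

/-- Number of edges from `u` to `v`. -/
def edgeCount (G : Multigraph V E) (u v : V) : ℕ :=
  (Finset.univ.filter (fun e => G.tail e = u ∧ G.head e = v)).card

/-- Directed graph Laplacian: `Δ u v = d_v δ_{uv} − d_{vu}`. -/
def laplacian (G : Multigraph V E) : Matrix V V ℤ :=
  fun u v => (if u = v then (G.outdeg v : ℤ) else 0) - (G.edgeCount v u : ℤ)

def Adj (G : Multigraph V E) (u v : V) : Prop := ∃ e, G.tail e = u ∧ G.head e = v

/-- Strong connectivity: every vertex reaches every other by a directed path. -/
def StronglyConnected (G : Multigraph V E) : Prop :=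
  ∀ u v : V, Relation.ReflTransGen G.Adj u v

/-- A list of edges forms a walk: consecutive edges are incident. -/
def IsWalk (G : Multigraph V E) : List E → Prop
  | [] => True
  | [_] => True
  | e :: f :: rest => G.head e = G.tail f ∧ G.IsWalk (f :: rest)

/-- A nonempty walk that returns to its starting vertex. -/
def IsClosedWalk (G : Multigraph V E) (w : List E) : Prop :=
  w ≠ [] ∧ G.IsWalk w ∧ w.getLast?.map G.head = w.head?.map G.tail

/-- The walk starts at vertex `v`. -/
def StartsAt (G : Multigraph V E) (w : List E) (v : V) : Prop :=
  w.head?.map G.tail = some v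

/-- A π-Eulerian tour: closed walk using each edge `e` exactly `π (tail e)` times. -/
def IsPiEulerian (G : Multigraph V E) (π : V → ℕ) (w : List E) : Prop :=
  G.IsClosedWalk w ∧ ∀ e : E, w.count e = π (G.tail e)

/-- An Eulerian tour: closed walk using each edge exactly once. -/
def IsEulerian (G : Multigraph V E) (w : List E) : Prop :=
  G.IsClosedWalk w ∧ ∀ e : E, w.count e = 1

/-- A multi-Eulerian tour: closed walk using each edge at least once, and edges
with the same tail equally often. -/
def IsMultiEulerian (G : Multigraph V E) (w : List E) : Prop :=
  G.IsClosedWalk w ∧ (∀ e : E, 1 ≤ w.count e) ∧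
  ∀ e f : E, G.tail e = G.tail f → w.count e = w.count f

/-- A spanning tree oriented toward `w`: every vertex other than `w` has exactly one
outgoing edge, `w` has none, and every vertex reaches `w` inside the subgraph. -/
def IsTreeTo (G : Multigraph V E) (w : V) (T : Finset E) : Prop :=
  (∀ v, v ≠ w → (T.filter (fun e => G.tail e = v)).card = 1) ∧
  (∀ e ∈ T, G.tail e ≠ w) ∧
  ∀ v : V, Relation.ReflTransGen (fun a b => ∃ e ∈ T, G.tail e = a ∧ G.head e = b) v w

/-- Number of spanning trees oriented toward `w`. -/
noncomputable def treeCount (G : Multigraph V E) (w : V) : ℕ :=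
  Nat.card {T : Finset E // G.IsTreeTo w T}

end Multigraph

namespace MEaux

open Finset

variable {V E : Type} [Fintype V] [Fintype E] [DecidableEq V] [DecidableEq E]
variable (G : Multigraph V E)

/-- Out-edges at `v`, as a subtype. -/
abbrev D (v : V) := {e : E // G.tail e = v}

/-- Successor in `Fin n` with wraparound. -/
def finSucc {n : ℕ} (i : Fin n) : Fin n := ⟨(i.val + 1) % n, Nat.mod_lt _ i.pos⟩

lemma finSucc_iterate {n : ℕ} (j : ℕ) (i : Fin n) :
    (finSucc^[j] i).val = (i.val + j) % n := by
  induction j with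
  | zero => simp [Nat.mod_eq_of_lt i.isLt]
  | succ j ih =>
    rw [Function.iterate_succ_apply']
    show ((finSucc^[j] i).val + 1) % n = _
    rw [ih, Nat.mod_add_mod, Nat.add_assoc]

noncomputable def eqv (v : V) : D G v ≃ Fin (Fintype.card (D G v)) := Fintype.equivFin _

noncomputable def sig (v : V) (x : D G v) : D G v := (eqv G v).symm (finSucc (eqv G v x))

lemma sig_iterate (v : V) (j : ℕ) (x : D G v) :
    eqv G v ((sig G v)^[j] x) = finSucc^[j] (eqv G v x) := by
  induction j with
  | zero => simp
  | succ j ih =>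
    rw [Function.iterate_succ_apply', Function.iterate_succ_apply']
    show eqv G v ((eqv G v).symm _) = _
    rw [Equiv.apply_symm_apply, ih]

lemma sig_covers (v : V) (x y : D G v) : ∃ j, (sig G v)^[j] x = y := by
  set n := Fintype.card (D G v)
  refine ⟨n + (eqv G v y).val - (eqv G v x).val, ?_⟩
  apply (eqv G v).injective
  apply Fin.ext
  rw [sig_iterate, finSucc_iterate]
  have h1 : (eqv G v x).val ≤ n + (eqv G v y).val :=
    le_trans (le_of_lt (eqv G v x).isLt) (Nat.le_add_right _ _)
  rw [Nat.add_sub_cancel' h1, Nat.add_mod_left, Nat.mod_eq_of_lt (eqv G v y).isLt]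

lemma sig_dvd (v : V) (m : ℕ) (x : D G v) (h : (sig G v)^[m] x = x) :
    Fintype.card (D G v) ∣ m := by
  set n := Fintype.card (D G v)
  have h2 : (finSucc^[m] (eqv G v x)).val = (eqv G v x).val := by
    rw [← sig_iterate, h]
  rw [finSucc_iterate] at h2
  have : m ≡ 0 [MOD n] := by
    have h3 : (eqv G v x).val + m ≡ (eqv G v x).val + 0 [MOD n] := by
      show ((eqv G v x).val + m) % n = ((eqv G v x).val + 0) % n
      rw [h2, Nat.add_zero, Nat.mod_eq_of_lt (eqv G v x).isLt]
    exact (Nat.ModEq.add_left_cancel' _ h3)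
  exact (Nat.modEq_zero_iff_dvd).1 this

/-- Count of a residue class in `range (n*m)`. -/
lemma card_filter_mod (n r : ℕ) (hn : 0 < n) (hr : r < n) (m : ℕ) :
    ((range (n * m)).filter (fun j => j % n = r)).card = m := by
  induction m with
  | zero => simp
  | succ m ih =>
    have hsplit : range (n * (m + 1)) = range (n * m) ∪ Finset.Ico (n * m) (n * m + n) := by
      have hmul : n * (m + 1) = n * m + n := by ring
      rw [hmul, Finset.range_eq_Ico, Finset.range_eq_Ico,
        Finset.Ico_union_Ico_eq_Ico (Nat.zero_le _) (Nat.le_add_right _ _)]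
    have hdisj : Disjoint ((range (n * m)).filter (fun j => j % n = r))
        ((Finset.Ico (n * m) (n * m + n)).filter (fun j => j % n = r)) := by
      apply Finset.disjoint_filter_filter
      rw [Finset.range_eq_Ico]
      exact Finset.Ico_disjoint_Ico_consecutive _ _ _
    rw [hsplit, Finset.filter_union, Finset.card_union_of_disjoint hdisj, ih]
    have hsingle : (Finset.Ico (n * m) (n * m + n)).filter (fun j => j % n = r)
        = {n * m + r} := by
      ext j
      simp only [Finset.mem_filter, Finset.mem_Ico, Finset.mem_singleton]
      constructor
      · rintro ⟨⟨h1, h2⟩, h3⟩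
        have hdm := Nat.div_add_mod j n
        have hge : m ≤ j / n := (Nat.le_div_iff_mul_le hn).2 (by linarith [h1])
        have hlt : j / n < m + 1 := (Nat.div_lt_iff_lt_mul hn).2 (by linarith [h2])
        have hq : j / n = m := by omega
        rw [hq, h3] at hdm
        omega
      · rintro rfl
        refine ⟨⟨Nat.le_add_right _ _, by omega⟩, ?_⟩
        rw [Nat.mul_add_mod, Nat.mod_eq_of_lt hr]
    rw [hsingle, Finset.card_singleton]

/-- Counting iterates of `sig` hitting a given target. -/
lemma sig_count (v : V) (x y : D G v) (k : ℕ) (hk : Fintype.card (D G v) ∣ k) :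
    ((range k).filter (fun j => (sig G v)^[j] x = y)).card = k / Fintype.card (D G v) := by
  set n := Fintype.card (D G v) with hn
  have hn0 : 0 < n := Fintype.card_pos_iff.2 ⟨x⟩
  obtain ⟨m, rfl⟩ := hk
  set i0 := (eqv G v x).val
  set k0 := (eqv G v y).val
  have hiff : ∀ j, ((sig G v)^[j] x = y) ↔ (j % n = (n + k0 - i0) % n) := by
    intro j
    constructor
    · intro h
      have h2 : (finSucc^[j] (eqv G v x)).val = k0 := by rw [← sig_iterate, h]
      rw [finSucc_iterate] at h2
      have : i0 + j ≡ i0 + (n + k0 - i0) [MOD n] := by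
        rw [Nat.add_sub_cancel' (le_trans (le_of_lt (eqv G v x).isLt) (Nat.le_add_right _ _))]
        show (i0 + j) % n = (n + k0) % n
        rw [h2, Nat.add_mod_left, Nat.mod_eq_of_lt (eqv G v y).isLt]
      exact Nat.ModEq.add_left_cancel' _ this
    · intro h
      apply (eqv G v).injective
      apply Fin.ext
      rw [sig_iterate, finSucc_iterate]
      show (i0 + j) % n = k0
      have hm : i0 + j ≡ i0 + (n + k0 - i0) [MOD n] := Nat.ModEq.add_left i0 h
      rw [Nat.add_sub_cancel' (le_trans (le_of_lt (eqv G v x).isLt) (Nat.le_add_right _ _))] at hm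
      have h2 : (i0 + j) % n = (n + k0) % n := hm
      rw [h2, Nat.add_mod_left, Nat.mod_eq_of_lt (eqv G v y).isLt]
  have : ((range (n * m)).filter (fun j => (sig G v)^[j] x = y))
      = ((range (n * m)).filter (fun j => j % n = (n + k0 - i0) % n)) := by
    apply Finset.filter_congr
    intro j _
    simp [hiff j]
  rw [this, card_filter_mod n _ hn0 (Nat.mod_lt _ hn0), Nat.mul_div_cancel_left _ hn0]

/-- Rotor-walk state: current vertex plus rotor configuration. -/
abbrev S := V × ((v : V) → D G v)

noncomputable def step (s : S G) : S G :=
  (G.head (s.2 s.1).val, Function.update s.2 s.1 (sig G s.1 (s.2 s.1)))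

noncomputable def edg (s : S G) : E := (s.2 s.1).val

lemma tail_edg (s : S G) : G.tail (edg G s) = s.1 := (s.2 s.1).2

lemma step_fst (s : S G) : (step G s).1 = G.head (edg G s) := rfl

noncomputable def wlist (s : S G) : ℕ → List E
  | 0 => []
  | n + 1 => edg G s :: wlist (step G s) n

noncomputable def visits (s : S G) (u : V) (n : ℕ) : ℕ :=
  ((range n).filter (fun t => ((step G)^[t] s).1 = u)).card

lemma visits_zero (s : S G) (u : V) : visits G s u 0 = 0 := by simp [visits]

lemma visits_succ (s : S G) (u : V) (n : ℕ) :
    visits G s u (n + 1) = visits G s u n + (if ((step G)^[n] s).1 = u then 1 else 0) := by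
  unfold visits
  rw [Finset.range_add_one, Finset.filter_insert]
  by_cases h : ((step G)^[n] s).1 = u
  · rw [if_pos h, if_pos h, Finset.card_insert_of_notMem (by simp)]
  · rw [if_neg h, if_neg h, Nat.add_zero]

lemma visits_mono (s : S G) (u : V) {m n : ℕ} (h : m ≤ n) :
    visits G s u m ≤ visits G s u n :=
  Finset.card_le_card (Finset.filter_subset_filter _ (Finset.range_subset_range.2 h))

lemma visits_step_le (s : S G) (u : V) (n : ℕ) :
    visits G s u (n + 1) ≤ visits G s u n + 1 := by
  rw [visits_succ]; split <;> omega

/-- Rotor configuration evolution. -/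
lemma config_eq (s : S G) (v : V) : ∀ n : ℕ,
    ((step G)^[n] s).2 v = (sig G v)^[visits G s v n] (s.2 v) := by
  intro n
  induction n with
  | zero => simp [visits_zero]
  | succ n ih =>
    rw [Function.iterate_succ_apply', visits_succ]
    rcases h : (step G)^[n] s with ⟨u, c⟩
    rw [h] at ih
    by_cases hu : u = v
    · subst hu
      show Function.update c u (sig G u (c u)) u = _
      rw [Function.update_self, if_pos rfl, Function.iterate_succ_apply']
      exact congrArg _ ih
    · show Function.update c u (sig G u (c u)) v = _
      rw [Function.update_of_ne (Ne.symm hu), if_neg hu, Nat.add_zero]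
      exact ih

/-- `List.count` on a rotor trail as a sum over times. -/
lemma count_wlist (e : E) : ∀ (n : ℕ) (s : S G),
    (wlist G s n).count e = ∑ t ∈ range n, if edg G ((step G)^[t] s) = e then 1 else 0 := by
  intro n
  induction n with
  | zero =>
    intro s
    rw [show wlist G s 0 = [] from rfl]
    simp
  | succ n ih =>
    intro s
    show (edg G s :: wlist G (step G s) n).count e = _
    rw [List.count_cons, ih (step G s), Finset.sum_range_succ']
    simp only [Function.iterate_succ_apply, Function.iterate_zero_apply]
    by_cases h : edg G s = e <;> simp [h] <;> rw [Finset.card_filter] <;> congr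

lemma edg_eq_iff (s : S G) (e : E) :
    edg G s = e ↔ s.1 = G.tail e ∧ s.2 (G.tail e) = ⟨e, rfl⟩ := by
  rcases s with ⟨u, c⟩
  show (c u).val = e ↔ u = G.tail e ∧ c (G.tail e) = ⟨e, rfl⟩
  constructor
  · intro h
    have hu : u = G.tail e := by rw [← h]; exact ((c u).2).symm
    subst hu
    exact ⟨rfl, Subtype.ext h⟩
  · rintro ⟨h1, h2⟩
    subst h1
    rw [h2]

/-- Visit-time reindexing. -/
lemma visit_reindex (s : S G) (v : V) (Q : ℕ → Prop) [DecidablePred Q] : ∀ n : ℕ,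
    (∑ t ∈ range n, if ((step G)^[t] s).1 = v ∧ Q (visits G s v t) then 1 else 0)
      = ∑ j ∈ range (visits G s v n), if Q j then 1 else 0 := by
  intro n
  induction n with
  | zero => simp [visits_zero]
  | succ n ih =>
    rw [Finset.sum_range_succ, ih, visits_succ]
    by_cases h : ((step G)^[n] s).1 = v
    · rw [if_pos h, Finset.sum_range_succ]
      simp [h]
    · simp [h]

lemma iterate_periodic {p : ℕ} {s : S G} (hp : (step G)^[p] s = s) (t : ℕ) :
    (step G)^[t + p] s = (step G)^[t] s := by
  rw [Function.iterate_add_apply, hp]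

lemma periodic_sum {p : ℕ} (f : ℕ → ℕ) (hf : ∀ t, f (t + p) = f t) (q : ℕ) :
    ∑ t ∈ range (q * p), f t = q * ∑ t ∈ range p, f t := by
  have hshift : ∀ q t, f (t + q * p) = f t := by
    intro q
    induction q with
    | zero => simp
    | succ q ih =>
      intro t
      have : t + (q + 1) * p = (t + q * p) + p := by ring
      rw [this, hf, ih]
  induction q with
  | zero => simp
  | succ q ih =>
    have hmul : (q + 1) * p = q * p + p := by ring
    rw [hmul, Finset.range_eq_Ico, ← Finset.sum_Ico_consecutive _ (Nat.zero_le _) (Nat.le_add_right _ _),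
      ← Finset.range_eq_Ico, ih, Finset.sum_Ico_eq_sum_range]
    have : ∑ t ∈ range (q * p + p - q * p), f (q * p + t) = ∑ t ∈ range p, f t := by
      rw [Nat.add_sub_cancel_left]
      apply Finset.sum_congr rfl
      intro t _
      rw [Nat.add_comm, hshift]
    rw [this]
    ring

lemma visits_mul {p : ℕ} {s : S G} (hp : (step G)^[p] s = s) (u : V) (q : ℕ) :
    visits G s u (q * p) = q * visits G s u p := by
  unfold visits
  rw [Finset.card_filter, Finset.card_filter]
  exact periodic_sum (fun t => if ((step G)^[t] s).1 = u then 1 else 0)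
    (fun t => by
      show (if ((step G)^[t + p] s).1 = u then 1 else 0) = (if ((step G)^[t] s).1 = u then 1 else 0)
      rw [iterate_periodic G hp]) q

lemma visits_dvd {p : ℕ} {s : S G} (hp : (step G)^[p] s = s) (v : V) :
    Fintype.card (D G v) ∣ visits G s v p := by
  apply sig_dvd G v _ (s.2 v)
  rw [← config_eq, hp]

lemma count_formula (e : E) {p : ℕ} (s : S G) (hp : (step G)^[p] s = s) :
    (wlist G s p).count e
      = visits G s (G.tail e) p / Fintype.card (D G (G.tail e)) := by
  have hfix : (sig G (G.tail e))^[visits G s (G.tail e) p] (s.2 (G.tail e)) = s.2 (G.tail e) := by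
    rw [← config_eq, hp]
  rw [count_wlist]
  have h1 : (∑ t ∈ range p, if edg G ((step G)^[t] s) = e then 1 else 0)
      = ∑ t ∈ range p, if ((step G)^[t] s).1 = G.tail e ∧
          (sig G (G.tail e))^[visits G s (G.tail e) t] (s.2 (G.tail e)) = ⟨e, rfl⟩ then 1 else 0 := by
    apply Finset.sum_congr rfl
    intro t _
    simp only [edg_eq_iff, config_eq]
  rw [h1, visit_reindex G s (G.tail e)
    (fun j => (sig G (G.tail e))^[j] (s.2 (G.tail e)) = ⟨e, rfl⟩) p,
    ← Finset.card_filter, sig_count G (G.tail e) _ _ _ (visits_dvd G hp (G.tail e))]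

lemma wlist_head? (s : S G) (n : ℕ) : (wlist G s (n + 1)).head? = some (edg G s) := rfl

lemma wlist_getLast? : ∀ (n : ℕ) (s : S G),
    (wlist G s (n + 1)).getLast? = some (edg G ((step G)^[n] s)) := by
  intro n
  induction n with
  | zero => intro s; rfl
  | succ n ih =>
    intro s
    show (edg G s :: edg G (step G s) :: wlist G (step G (step G s)) n).getLast? = _
    rw [List.getLast?_cons_cons]
    rw [show (edg G (step G s) :: wlist G (step G (step G s)) n)
        = wlist G (step G s) (n + 1) from rfl, ih (step G s), Function.iterate_succ_apply]

lemma wlist_isWalk : ∀ (n : ℕ) (s : S G), G.IsWalk (wlist G s n) := by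
  intro n
  induction n with
  | zero => intro s; exact trivial
  | succ n ih =>
    intro s
    match n, ih with
    | 0, _ => exact trivial
    | Nat.succ m, ih =>
      refine ⟨?_, ih (step G s)⟩
      rw [tail_edg G (step G s), step_fst]

lemma ivt (f : ℕ → ℕ) (h0 : f 0 = 0) (hstep : ∀ m, f (m + 1) ≤ f m + 1) (j M : ℕ)
    (hM : j + 1 ≤ f M) : ∃ m, f m = j ∧ f (m + 1) = f m + 1 := by
  classical
  have hex : ∃ m, j + 1 ≤ f m := ⟨M, hM⟩
  have hm0 : j + 1 ≤ f (Nat.find hex) := Nat.find_spec hex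
  have hpos : Nat.find hex ≠ 0 := by
    intro h
    rw [h, h0] at hm0
    omega
  obtain ⟨m, hm⟩ : ∃ m, Nat.find hex = m + 1 := ⟨Nat.find hex - 1, by omega⟩
  have hlt : ¬ j + 1 ≤ f m := Nat.find_min hex (by omega)
  have hs := hstep m
  rw [hm] at hm0
  exact ⟨m, by omega, by omega⟩

lemma visits_pos {p : ℕ} {s : S G} (hp : (step G)^[p] s = s) (hp1 : 1 ≤ p)
    (hsc : G.StronglyConnected) (u : V) : 1 ≤ visits G s u p := by
  have base : ∀ w t, ((step G)^[t] s).1 = w → t < p → 1 ≤ visits G s w p := by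
    intro w t hw ht
    have : t ∈ (range p).filter (fun t => ((step G)^[t] s).1 = w) := by
      simp [Finset.mem_filter, Finset.mem_range, ht, hw]
    have := Finset.card_pos.2 ⟨t, this⟩
    exact this
  have key : ∀ u, Relation.ReflTransGen G.Adj s.1 u → 1 ≤ visits G s u p := by
    intro u h
    induction h with
    | refl => exact base s.1 0 rfl (by omega)
    | @tail b c hab hbc ih =>
      obtain ⟨e1, he1t, he1h⟩ := hbc
      subst he1t
      obtain ⟨j0, hj0⟩ := sig_covers G (G.tail e1) (s.2 (G.tail e1)) ⟨e1, rfl⟩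
      have hM : j0 + 1 ≤ visits G s (G.tail e1) ((j0 + 1) * p) := by
        rw [visits_mul G hp]
        calc j0 + 1 = (j0 + 1) * 1 := by ring
          _ ≤ (j0 + 1) * visits G s (G.tail e1) p := Nat.mul_le_mul_left _ ih
      obtain ⟨t, htj, hstep1⟩ := ivt (visits G s (G.tail e1)) (visits_zero G s _)
        (visits_step_le G s _) j0 _ hM
      have hvt : ((step G)^[t] s).1 = G.tail e1 := by
        have hv := visits_succ G s (G.tail e1) t
        by_contra h
        rw [if_neg h] at hv
        omega
      have hedg : edg G ((step G)^[t] s) = e1 :=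
        (edg_eq_iff G _ e1).2 ⟨hvt, by rw [config_eq, htj, hj0]⟩
      have hc : ((step G)^[t + 1] s).1 = c := by
        have hiter : (step G)^[t + 1] s = step G ((step G)^[t] s) :=
          Function.iterate_succ_apply' _ _ _
        rw [hiter, step_fst, hedg, he1h]
      have h1 : 1 ≤ visits G s c (t + 2) := by
        have hmem : t + 1 ∈ (range (t + 2)).filter (fun r => ((step G)^[r] s).1 = c) :=
          Finset.mem_filter.2 ⟨Finset.mem_range.2 (by omega), hc⟩
        exact Finset.card_pos.2 ⟨t + 1, hmem⟩
      have h2 : visits G s c (t + 2) ≤ visits G s c ((t + 2) * p) := by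
        apply visits_mono
        calc t + 2 = (t + 2) * 1 := by ring
          _ ≤ (t + 2) * p := Nat.mul_le_mul_left _ hp1
      rw [visits_mul G hp] at h2
      by_contra hcon
      have hz : visits G s c p = 0 := by omega
      rw [hz, Nat.mul_zero] at h2
      omega
  exact key u (hsc s.1 u)

end MEaux

theorem stmt10 {V E : Type} [Fintype V] [Fintype E] [DecidableEq V] [DecidableEq E]
    [Nonempty E] (G : Multigraph V E) (hsc : G.StronglyConnected) :
    ∃ w : List E, G.IsMultiEulerian w := by
  classical
  have hD : ∀ v : V, Nonempty (MEaux.D G v) := by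
    intro v
    by_cases h : ∃ e, G.tail e = v
    · obtain ⟨e, he⟩ := h
      exact ⟨⟨e, he⟩⟩
    · exfalso
      obtain ⟨e0⟩ := ‹Nonempty E›
      rcases Relation.ReflTransGen.cases_head (hsc v (G.tail e0)) with heq | ⟨b, ⟨e, het, _⟩, _⟩
      · exact h ⟨e0, heq.symm⟩
      · exact h ⟨e, het⟩
  obtain ⟨e0⟩ := ‹Nonempty E›
  let s0 : MEaux.S G := (G.tail e0, fun v => (hD v).some)
  obtain ⟨a, b, hab, hfab⟩ :=
    Finite.exists_ne_map_eq_of_infinite (fun t : ℕ => (MEaux.step G)^[t] s0)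
  obtain ⟨i, j, hij, hfij⟩ :
      ∃ i j, i < j ∧ (MEaux.step G)^[i] s0 = (MEaux.step G)^[j] s0 := by
    rcases Nat.lt_or_ge a b with h | h
    · exact ⟨a, b, h, hfab⟩
    · rcases Nat.lt_or_ge b a with h2 | h2
      · exact ⟨b, a, h2, hfab.symm⟩
      · exact absurd (Nat.le_antisymm h2 h) hab
  obtain ⟨q, hq⟩ : ∃ q, j - i = q + 1 := ⟨j - i - 1, by omega⟩
  set s := (MEaux.step G)^[i] s0 with hs
  have hp : (MEaux.step G)^[q + 1] s = s := by
    rw [hs, ← Function.iterate_add_apply]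
    have hqi : q + 1 + i = j := by omega
    rw [hqi, ← hfij]
  have hcnt : ∀ e : E, (MEaux.wlist G s (q + 1)).count e
      = MEaux.visits G s (G.tail e) (q + 1) / Fintype.card (MEaux.D G (G.tail e)) :=
    fun e => MEaux.count_formula G e s hp
  refine ⟨MEaux.wlist G s (q + 1), ⟨?_, ?_, ?_⟩, ?_, ?_⟩
  · show MEaux.edg G s :: MEaux.wlist G (MEaux.step G s) q ≠ []
    exact List.cons_ne_nil _ _
  · exact MEaux.wlist_isWalk G (q + 1) s
  · rw [MEaux.wlist_getLast? G q s, MEaux.wlist_head? G s q]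
    simp only [Option.map_some]
    have hlast : G.head (MEaux.edg G ((MEaux.step G)^[q] s)) = s.1 := by
      rw [← MEaux.step_fst G]
      have h2 : MEaux.step G ((MEaux.step G)^[q] s) = s :=
        (Function.iterate_succ_apply' _ _ _).symm.trans hp
      rw [h2]
    rw [hlast, MEaux.tail_edg G s]
  · intro e
    rw [hcnt e]
    have npos : 0 < Fintype.card (MEaux.D G (G.tail e)) := Fintype.card_pos_iff.2 (hD _)
    have kpos : 1 ≤ MEaux.visits G s (G.tail e) (q + 1) :=
      MEaux.visits_pos G hp (by omega) hsc _
    exact (Nat.one_le_div_iff npos).2 (Nat.le_of_dvd kpos (MEaux.visits_dvd G hp (G.tail e)))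
  · intro e f hef
    rw [hcnt e, hcnt f, hef]
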